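/- Let μ > 0 and let u : [0,1] → ℝ be four times continuously differentiable with u''''(x) = μ² u(x) for all x ∈ [0,1]. If u(0) = 0, u'(0) = 0, u(1) = 0, u''(1) = 0 and u'''(1) = 0, then u is identically zero on [0,1]. -/

import Mathlib

open Real Set

/-- A function with zero derivative (within `Icc 0 1`) is constant. -/
lemma beam_const_of_deriv_zero (g : ℝ → ℝ)
    (hg : ∀ x ∈ Icc (0:ℝ) 1, HasDerivWithinAt g 0 (Icc 0 1) x) :
    ∀ x ∈ Icc (0:ℝ) 1, g x = g 1 := by
  intro x hx
  have h := Convex.norm_image_sub_le_of_norm_hasDerivWithin_le (f' := fun _ => (0:ℝ))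
    (C := 0) hg (fun y hy => by simp) (convex_Icc 0 1)
    (right_mem_Icc.mpr zero_le_one) hx
  simp only [zero_mul, norm_le_zero_iff, sub_eq_zero] at h
  exact h

/-- Uniqueness for the first-order linear ODE `p' = a p` with `p 1 = 0` on `[0,1]`. -/
lemma beam_first_order (a : ℝ) (p : ℝ → ℝ)
    (hp : ∀ x ∈ Icc (0:ℝ) 1, HasDerivWithinAt p (a * p x) (Icc 0 1) x)
    (hp1 : p 1 = 0) : ∀ x ∈ Icc (0:ℝ) 1, p x = 0 := by
  have hq : ∀ x ∈ Icc (0:ℝ) 1,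
      HasDerivWithinAt (fun x => p x * Real.exp (-a * x)) 0 (Icc 0 1) x := by
    intro x hx
    have hexp : HasDerivAt (fun x : ℝ => Real.exp (-a * x))
        (Real.exp (-a * x) * (-a * 1)) x := ((hasDerivAt_id x).const_mul (-a)).exp
    have := (hp x hx).mul hexp.hasDerivWithinAt
    refine this.congr_deriv ?_
    ring
  have hc := beam_const_of_deriv_zero _ hq
  intro x hx
  have := hc x hx
  rw [hp1, zero_mul] at this
  have hepos : Real.exp (-a * x) ≠ 0 := (Real.exp_pos _).ne'
  exact (mul_eq_zero.mp this).resolve_right hepos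

/-- Uniqueness for `h'' = k² h` with `h 1 = h' 1 = 0` on `[0,1]`. -/
lemma beam_second_order_pos (k : ℝ) (h f : ℝ → ℝ)
    (hh : ∀ x ∈ Icc (0:ℝ) 1, HasDerivWithinAt h (f x) (Icc 0 1) x)
    (hf : ∀ x ∈ Icc (0:ℝ) 1, HasDerivWithinAt f (k ^ 2 * h x) (Icc 0 1) x)
    (h1 : h 1 = 0) (f1 : f 1 = 0) : ∀ x ∈ Icc (0:ℝ) 1, h x = 0 := by
  have hp : ∀ x ∈ Icc (0:ℝ) 1, HasDerivWithinAt (fun x => f x - k * h x)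
      ((-k) * (f x - k * h x)) (Icc 0 1) x := by
    intro x hx
    have := (hf x hx).sub ((hh x hx).const_mul k)
    refine this.congr_deriv ?_
    ring
  have hp0 := beam_first_order (-k) _ hp (by simp [h1, f1])
  have hh' : ∀ x ∈ Icc (0:ℝ) 1, HasDerivWithinAt h (k * h x) (Icc 0 1) x := by
    intro x hx
    have hfx : f x - k * h x = 0 := by simpa using hp0 x hx
    have hfx : f x = k * h x := by linarith
    rw [← hfx]
    exact hh x hx
  exact beam_first_order k h hh' h1

/-- Uniqueness for `h'' = -k² h` with `h 1 = h' 1 = 0` on `[0,1]`, via the energy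
`f² + k² h²`. -/
lemma beam_second_order_neg (k : ℝ) (hk : 0 < k) (h f : ℝ → ℝ)
    (hh : ∀ x ∈ Icc (0:ℝ) 1, HasDerivWithinAt h (f x) (Icc 0 1) x)
    (hf : ∀ x ∈ Icc (0:ℝ) 1, HasDerivWithinAt f (-(k ^ 2) * h x) (Icc 0 1) x)
    (h1 : h 1 = 0) (f1 : f 1 = 0) : ∀ x ∈ Icc (0:ℝ) 1, h x = 0 := by
  have hE : ∀ x ∈ Icc (0:ℝ) 1,
      HasDerivWithinAt (fun x => f x * f x + k ^ 2 * (h x * h x)) 0 (Icc 0 1) x := by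
    intro x hx
    have h2 := (hf x hx).mul (hf x hx)
    have h3 := ((hh x hx).mul (hh x hx)).const_mul (k ^ 2)
    have := h2.add h3
    refine this.congr_deriv ?_
    ring
  have hc := beam_const_of_deriv_zero _ hE
  intro x hx
  have hE1 := hc x hx
  simp only [h1, f1, mul_zero, zero_mul, add_zero] at hE1
  have hk2 : 0 < k ^ 2 := by positivity
  have hle : h x * h x ≤ 0 := by nlinarith [mul_self_nonneg (f x)]
  have heq0 : h x * h x = 0 := le_antisymm hle (mul_self_nonneg (h x))
  exact mul_self_eq_zero.mp heq0

/-- An eigenfunction of the beam equation `u'''' = μ² u` on `[0,1]`, clamped at `0`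
(`u(0) = u'(0) = 0`) and with vanishing value, second and third derivatives at `1`,
is identically zero on `[0,1]`. -/
theorem beam_vanishing (μ : ℝ) (hμ : 0 < μ) (u : ℝ → ℝ)
    (hu : ContDiffOn ℝ 4 u (Icc 0 1))
    (heq : ∀ x ∈ Icc (0:ℝ) 1, iteratedDerivWithin 4 u (Icc 0 1) x = μ ^ 2 * u x)
    (h0 : u 0 = 0)
    (h0' : derivWithin u (Icc 0 1) 0 = 0)
    (h1 : u 1 = 0)
    (h1'' : iteratedDerivWithin 2 u (Icc 0 1) 1 = 0)
    (h1''' : iteratedDerivWithin 3 u (Icc 0 1) 1 = 0) :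
    ∀ x ∈ Icc (0:ℝ) 1, u x = 0 := by
  set s : Set ℝ := Icc 0 1 with hs
  have hsu : UniqueDiffOn ℝ s := uniqueDiffOn_Icc zero_lt_one
  set u1 := iteratedDerivWithin 1 u s with hu1def
  set u2 := iteratedDerivWithin 2 u s with hu2def
  set u3 := iteratedDerivWithin 3 u s with hu3def
  -- derivative chain
  have hd : ∀ n : ℕ, n < 4 → ∀ x ∈ s,
      HasDerivWithinAt (iteratedDerivWithin n u s) (iteratedDerivWithin (n + 1) u s x) s x := by
    intro n hn x hx
    have hdiff : DifferentiableOn ℝ (iteratedDerivWithin n u s) s :=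
      hu.differentiableOn_iteratedDerivWithin (by exact_mod_cast hn) hsu
    have h := (hdiff x hx).hasDerivWithinAt
    rwa [← iteratedDerivWithin_succ] at h
  have hd0 : ∀ x ∈ s, HasDerivWithinAt u (u1 x) s x := by
    intro x hx
    have := hd 0 (by norm_num) x hx
    rwa [iteratedDerivWithin_zero] at this
  have hd1 : ∀ x ∈ s, HasDerivWithinAt u1 (u2 x) s x := fun x hx => hd 1 (by norm_num) x hx
  have hd2 : ∀ x ∈ s, HasDerivWithinAt u2 (u3 x) s x := fun x hx => hd 2 (by norm_num) x hx
  have hd3 : ∀ x ∈ s, HasDerivWithinAt u3 (μ ^ 2 * u x) s x := by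
    intro x hx
    have := hd 3 (by norm_num) x hx
    rwa [heq x hx] at this
  set k := Real.sqrt μ with hkdef
  have hk : 0 < k := Real.sqrt_pos.mpr hμ
  have hk2 : k ^ 2 = μ := Real.sq_sqrt hμ.le
  set c := u1 1 with hcdef
  have h1mem : (1:ℝ) ∈ s := right_mem_Icc.mpr zero_le_one
  have h0mem : (0:ℝ) ∈ s := left_mem_Icc.mpr zero_le_one
  -- w part: h = u2 - μ u + (μ c / k) sin (k (x - 1)), satisfies h'' = -k² h
  have hW : ∀ x ∈ s, u2 x - μ * u x + (μ * c / k) * Real.sin (k * (x - 1)) = 0 := by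
    apply beam_second_order_neg k hk _
      (fun x => u3 x - μ * u1 x + (μ * c) * Real.cos (k * (x - 1)))
    · intro x hx
      have hsin : HasDerivAt (fun x : ℝ => Real.sin (k * (x - 1)))
          (Real.cos (k * (x - 1)) * (k * 1)) x :=
        (((hasDerivAt_id x).sub_const 1).const_mul k).sin
      have := ((hd2 x hx).sub ((hd0 x hx).const_mul μ)).add
        (hsin.hasDerivWithinAt.const_mul (μ * c / k))
      refine this.congr_deriv ?_
      field_simp
    · intro x hx
      have hcos : HasDerivAt (fun x : ℝ => Real.cos (k * (x - 1)))
          (-Real.sin (k * (x - 1)) * (k * 1)) x :=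
        (((hasDerivAt_id x).sub_const 1).const_mul k).cos
      have := ((hd3 x hx).sub ((hd1 x hx).const_mul μ)).add
        (hcos.hasDerivWithinAt.const_mul (μ * c))
      refine this.congr_deriv ?_
      rw [← hk2]
      field_simp
      ring
    · simp [h1, h1'', ← hu2def]
    · simp [h1''', ← hu3def, ← hcdef]
  -- z part: g = u2 + μ u - (μ c / k) sinh (k (x - 1)), satisfies g'' = k² g
  have hZ : ∀ x ∈ s, u2 x + μ * u x - (μ * c / k) * Real.sinh (k * (x - 1)) = 0 := by
    apply beam_second_order_pos k _
      (fun x => u3 x + μ * u1 x - (μ * c) * Real.cosh (k * (x - 1)))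
    · intro x hx
      have hsinh : HasDerivAt (fun x : ℝ => Real.sinh (k * (x - 1)))
          (Real.cosh (k * (x - 1)) * (k * 1)) x :=
        (((hasDerivAt_id x).sub_const 1).const_mul k).sinh
      have := ((hd2 x hx).add ((hd0 x hx).const_mul μ)).sub
        (hsinh.hasDerivWithinAt.const_mul (μ * c / k))
      refine this.congr_deriv ?_
      field_simp
    · intro x hx
      have hcosh : HasDerivAt (fun x : ℝ => Real.cosh (k * (x - 1)))
          (Real.sinh (k * (x - 1)) * (k * 1)) x :=
        (((hasDerivAt_id x).sub_const 1).const_mul k).cosh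
      have := ((hd3 x hx).add ((hd1 x hx).const_mul μ)).sub
        (hcosh.hasDerivWithinAt.const_mul (μ * c))
      refine this.congr_deriv ?_
      rw [← hk2]
      field_simp
      ring
    · simp [h1, h1'', ← hu2def]
    · simp [h1''', ← hu3def, ← hcdef]
  -- evaluate at 0 to get c = 0
  have hW0 := hW 0 h0mem
  have hZ0 := hZ 0 h0mem
  have harg : k * ((0:ℝ) - 1) = -k := by ring
  simp only [harg, Real.sin_neg, Real.sinh_neg, h0] at hW0 hZ0
  -- from these: (μ c / k) * (sinh k + sin k) = 0
  have hsum : (μ * c / k) * (Real.sinh k + Real.sin k) = 0 := by nlinarith [hW0, hZ0]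
  have hpos : 0 < Real.sinh k + Real.sin k := by
    have h1 := Real.self_lt_sinh_iff.mpr hk
    have h2 : |Real.sin k| ≤ |k| := Real.abs_sin_le_abs
    rw [abs_of_pos hk] at h2
    have := abs_le.mp h2
    linarith [this.1]
  have hc0 : c = 0 := by
    have := mul_eq_zero.mp hsum
    rcases this with h | h
    · have hμc : μ * c = 0 := by field_simp at h; simpa using h
      exact (mul_eq_zero.mp hμc).resolve_left hμ.ne'
    · linarith
  -- conclude u = 0
  intro x hx
  have hWx := hW x hx
  have hZx := hZ x hx
  rw [hc0] at hWx hZx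
  simp only [mul_zero, zero_mul, zero_div, zero_add, add_zero, sub_zero] at hWx hZx
  have hmu : μ * u x = 0 := by linarith
  exact (mul_eq_zero.mp hmu).resolve_left hμ.ne'
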